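/- The vertices of the chain polytope C(P) of a finite poset P are exactly the characteristic vectors of antichains of P. -/

import Mathlib

open scoped Classical

/-- The chain polytope of a finite poset `P`. -/
def chainPolytope (P : Type*) [PartialOrder P] [Fintype P] : Set (P → ℝ) :=
  {x | (∀ p, 0 ≤ x p) ∧
    ∀ s : Finset P, IsChain (· ≤ ·) (s : Set P) → ∑ p ∈ s, x p ≤ 1}

section Aux

variable {P : Type*} [PartialOrder P] [Fintype P]

/-- characteristic vector of a set -/
noncomputable def achi (A : Set P) : P → ℝ := fun p => if p ∈ A then 1 else 0

/-- the set of characteristic vectors of antichains -/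
def antiVecs (P : Type*) [PartialOrder P] [Fintype P] : Set (P → ℝ) :=
  {f | ∃ A : Set P, IsAntichain (· ≤ ·) A ∧ f = achi A}

lemma sum_achi (A : Set P) (s : Finset P) :
    ∑ p ∈ s, achi A p = ((s.filter (· ∈ A)).card : ℝ) := by
  simp [achi, Finset.sum_boole]

lemma card_chain_inter_antichain {A : Set P} (hA : IsAntichain (· ≤ ·) A)
    {s : Finset P} (hs : IsChain (· ≤ ·) (s : Set P)) :
    (s.filter (· ∈ A)).card ≤ 1 := by
  rw [Finset.card_le_one]
  intro a ha b hb
  simp only [Finset.mem_filter] at ha hb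
  by_contra hne
  rcases hs ha.1 hb.1 (by exact_mod_cast hne) with h | h
  · exact hA ha.2 hb.2 (by exact_mod_cast hne) h
  · exact hA hb.2 ha.2 (Ne.symm (by exact_mod_cast hne)) h

lemma achi_mem {A : Set P} (hA : IsAntichain (· ≤ ·) A) :
    achi A ∈ chainPolytope P := by
  constructor
  · intro p; unfold achi; positivity
  · intro s hs
    rw [sum_achi]
    exact_mod_cast card_chain_inter_antichain hA hs

lemma singleton_chain (p : P) : IsChain (· ≤ ·) (({p} : Finset P) : Set P) := by
  simp [IsChain, Set.Pairwise]

lemma le_one_of_mem {x : P → ℝ} (hx : x ∈ chainPolytope P) (p : P) : x p ≤ 1 := by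
  have := hx.2 {p} (singleton_chain p)
  simpa using this

/-- every element of a finite set is below a maximal element of it -/
lemma exists_max_above (S : Finset P) {c : P} (hc : c ∈ S) :
    ∃ m ∈ S, c ≤ m ∧ ∀ q ∈ S, ¬ m < q := by
  obtain ⟨m, hm, hmax⟩ := (S.filter (c ≤ ·)).exists_maximal
      ⟨c, by simp [hc]⟩
  simp only [Finset.mem_filter] at hm
  refine ⟨m, hm.1, hm.2, fun q hq hlt => ?_⟩
  exact lt_irrefl m (lt_of_lt_of_le hlt (hmax (Finset.mem_filter.2 ⟨hq, hm.2.trans hlt.le⟩) hlt.le))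

lemma chainPolytope_convex : Convex ℝ (chainPolytope P) := by
  intro x hx y hy a b ha hb hab
  constructor
  · intro p
    have := hx.1 p; have := hy.1 p
    simp only [Pi.add_apply, Pi.smul_apply, smul_eq_mul]
    nlinarith
  · intro s hs
    have h1 := hx.2 s hs
    have h2 := hy.2 s hs
    simp only [Pi.add_apply, Pi.smul_apply, smul_eq_mul]
    rw [Finset.sum_add_distrib, ← Finset.mul_sum, ← Finset.mul_sum]
    nlinarith

/-- key decomposition lemma -/
lemma mem_hull_aux : ∀ n : ℕ, ∀ x : P → ℝ, x ∈ chainPolytope P →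
    (Finset.univ.filter (fun p => x p ≠ 0)).card ≤ n →
    x ∈ convexHull ℝ (antiVecs P) := by
  intro n
  induction n with
  | zero =>
    intro x hx hcard
    have hS : (Finset.univ.filter (fun p => x p ≠ 0)) = ∅ :=
      Finset.card_eq_zero.1 (Nat.le_zero.1 hcard)
    have hx0 : x = achi (∅ : Set P) := by
      funext p
      have : p ∉ Finset.univ.filter (fun p => x p ≠ 0) := by simp [hS]
      simp only [Finset.mem_filter, Finset.mem_univ, true_and, not_not] at this
      simp [achi, this]
    exact subset_convexHull ℝ _ ⟨∅, by simp [IsAntichain], hx0⟩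
  | succ n ih =>
    intro x hx hcard
    set S := Finset.univ.filter (fun p => x p ≠ 0) with hSdef
    by_cases hSe : S = ∅
    · exact ih x hx (by rw [← hSdef, hSe]; simp)
    -- maximal elements of the support
    set A := S.filter (fun p => ∀ q ∈ S, ¬ p < q) with hAdef
    have hSmem : ∀ p, p ∈ S ↔ x p ≠ 0 := by intro p; simp [hSdef]
    have hxpos : ∀ p ∈ S, 0 < x p := fun p hp =>
      lt_of_le_of_ne (hx.1 p) (Ne.symm ((hSmem p).1 hp))
    have hAanti : IsAntichain (· ≤ ·) ((A : Finset P) : Set P) := by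
      intro p hp q hq hne hle
      simp only [hAdef, Finset.coe_filter, Set.mem_setOf_eq] at hp hq
      exact hp.2 q hq.1 (lt_of_le_of_ne hle hne)
    have hAne : A.Nonempty := by
      obtain ⟨m, hm, hmax⟩ := S.exists_maximal (Finset.nonempty_of_ne_empty hSe)
      exact ⟨m, Finset.mem_filter.2 ⟨hm, fun q hq hlt => lt_irrefl m (lt_of_lt_of_le hlt (hmax hq hlt.le))⟩⟩
    -- every support element is below an element of A
    have hbelow : ∀ c ∈ S, ∃ m ∈ A, c ≤ m := by
      intro c hc
      obtain ⟨m, hm, hcm, hmax⟩ := exists_max_above S hc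
      exact ⟨m, Finset.mem_filter.2 ⟨hm, hmax⟩, hcm⟩
    set t := A.inf' hAne x with htdef
    obtain ⟨a₀, ha₀A, ha₀⟩ := Finset.exists_mem_eq_inf' hAne x
    have hAS : A ⊆ S := Finset.filter_subset _ _
    have htpos : 0 < t := by rw [htdef, ha₀]; exact hxpos a₀ (hAS ha₀A)
    have htle : ∀ p ∈ A, t ≤ x p := fun p hp => Finset.inf'_le x hp
    have ht1 : t ≤ 1 := by rw [htdef, ha₀]; exact le_one_of_mem hx a₀
    -- key chain bound: chains avoiding A have sum ≤ 1 - t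
    have hkey : ∀ s : Finset P, IsChain (· ≤ ·) (s : Set P) →
        (s.filter (· ∈ (A : Finset P))).card = 0 → ∑ p ∈ s, x p ≤ 1 - t := by
      intro s hs hdisj
      rw [Finset.card_eq_zero, Finset.filter_eq_empty_iff] at hdisj
      have hsum : ∑ p ∈ s, x p = ∑ p ∈ s.filter (fun p => x p ≠ 0), x p :=
        (Finset.sum_filter_ne_zero s).symm
      set s' := s.filter (fun p => x p ≠ 0) with hs'def
      rcases Finset.eq_empty_or_nonempty s' with hs'e | hs'ne
      · rw [hsum, hs'e]; simp; linarith
      · have hs'sub : s' ⊆ s := Finset.filter_subset _ _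
        have hs'chain : IsChain (· ≤ ·) ((s' : Finset P) : Set P) :=
          hs.mono (by exact_mod_cast hs'sub)
        obtain ⟨c, hcs', hcmax⟩ := s'.exists_maximal hs'ne
        have hcS : c ∈ S := by
          simp only [hs'def, Finset.mem_filter] at hcs'
          exact (hSmem c).2 hcs'.2
        have hctop : ∀ p ∈ s', p ≤ c := by
          intro p hp
          rcases eq_or_ne p c with h | h
          · exact h.le
          · rcases hs'chain (Finset.mem_coe.2 hp) (Finset.mem_coe.2 hcs') h with h' | h'
            · exact h'
            · exact absurd (lt_of_le_of_ne h' (Ne.symm h)) (fun hlt => lt_irrefl c (lt_of_lt_of_le hlt (hcmax hp hlt.le)))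
        obtain ⟨m, hmA, hcm⟩ := hbelow c hcS
        have hms' : m ∉ s' := fun hms' => hdisj (hs'sub hms') hmA
        have hchain2 : IsChain (· ≤ ·) ((insert m s' : Finset P) : Set P) := by
          rw [Finset.coe_insert]
          exact hs'chain.insert (fun b hb _ => Or.inr ((hctop b hb).trans hcm))
        have hsum2 := hx.2 (insert m s') hchain2
        rw [Finset.sum_insert hms'] at hsum2
        have := htle m hmA
        rw [hsum]
        linarith
    -- case t = 1 : x is itself a characteristic vector
    rcases eq_or_lt_of_le ht1 with ht1' | ht1'
    · have hxeq : x = achi ((A : Finset P) : Set P) := by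
        funext p
        by_cases hp : p ∈ A
        · have h1 := htle p hp
          have h2 := le_one_of_mem hx p
          simp only [achi, Finset.mem_coe, hp, if_pos]
          linarith [ht1'.symm ▸ h1]
        · simp only [achi, Finset.mem_coe, hp, if_neg, if_false]
          by_contra hne
          have hpS : p ∈ S := (hSmem p).2 hne
          obtain ⟨m, hmA, hpm⟩ := hbelow p hpS
          have hpm' : p ≠ m := fun h => hp (h ▸ hmA)
          have hchain : IsChain (· ≤ ·) (({p, m} : Finset P) : Set P) := by
            intro u hu v hv hne
            simp only [Finset.coe_insert, Finset.coe_singleton, Set.mem_insert_iff,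
              Set.mem_singleton_iff] at hu hv
            rcases hu with h1 | h1 <;> rcases hv with h2 | h2
            · exact absurd (h1.trans h2.symm) hne
            · exact Or.inl (by rw [h1, h2]; exact hpm)
            · exact Or.inr (by rw [h2, h1]; exact hpm)
            · exact absurd (h1.trans h2.symm) hne
          have hsum := hx.2 {p, m} hchain
          rw [Finset.sum_insert (by simpa using hpm')] at hsum
          rw [Finset.sum_singleton] at hsum
          have h1 : t ≤ x m := htle m hmA
          have h2 : 0 < x p := hxpos p hpS
          rw [← ht1'] at hsum
          linarith
      exact subset_convexHull ℝ _ ⟨_, hAanti, hxeq⟩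
    -- case t < 1 : peel off t • χ_A
    · set y : P → ℝ := fun p => (1 - t)⁻¹ * (x p - t * achi ((A : Finset P) : Set P) p)
        with hydef
      have h1t : (0:ℝ) < 1 - t := by linarith
      have hy : y ∈ chainPolytope P := by
        constructor
        · intro p
          simp only [hydef]
          by_cases hp : p ∈ A
          · have := htle p hp
            have : 0 ≤ x p - t * achi ((A : Finset P) : Set P) p := by
              simp [achi, hp]; linarith
            positivity
          · have := hx.1 p
            have : 0 ≤ x p - t * achi ((A : Finset P) : Set P) p := by
              simp [achi, hp]; linarith
            positivity
        · intro s hs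
          simp only [hydef]
          rw [← Finset.mul_sum]
          rw [inv_mul_le_iff₀ h1t, mul_one]
          have hexp : ∑ p ∈ s, (x p - t * achi ((A : Finset P) : Set P) p)
              = ∑ p ∈ s, x p - t * ((s.filter (· ∈ (A : Finset P))).card : ℝ) := by
            rw [Finset.sum_sub_distrib, ← Finset.mul_sum, sum_achi]
            simp only [Finset.mem_coe]
          rw [hexp]
          rcases Nat.eq_zero_or_pos (s.filter (· ∈ (A : Finset P))).card with hc | hc
          · rw [hc]
            have := hkey s hs hc
            simpa using this
          · have hge : (1:ℝ) ≤ ((s.filter (· ∈ (A : Finset P))).card : ℝ) := by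
              exact_mod_cast hc
            have h1 := hx.2 s hs
            nlinarith
      have hsub : Finset.univ.filter (fun p => y p ≠ 0) ⊂ S := by
        constructor
        · intro p hp
          simp only [Finset.mem_filter, Finset.mem_univ, true_and] at hp
          rw [hSmem]
          intro hxp
          apply hp
          have hpA : p ∉ A := fun h => by
            have := hxpos p (hAS h); rw [hxp] at this; linarith
          simp [hydef, achi, hxp, hpA]
        · intro hcon
          have ha₀' : a₀ ∈ Finset.univ.filter (fun p => y p ≠ 0) := hcon (hAS ha₀A)
          simp only [Finset.mem_filter, Finset.mem_univ, true_and] at ha₀'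
          apply ha₀'
          simp [hydef, achi, ha₀A, ← ha₀]
          exact Or.inr (sub_eq_zero.2 htdef.symm)
      have hycard : (Finset.univ.filter (fun p => y p ≠ 0)).card ≤ n := by
        have := Finset.card_lt_card hsub
        omega
      have hyhull := ih y hy hycard
      have hχhull : achi ((A : Finset P) : Set P) ∈ convexHull ℝ (antiVecs P) :=
        subset_convexHull ℝ _ ⟨_, hAanti, rfl⟩
      have hcomb : x = t • achi ((A : Finset P) : Set P) + (1 - t) • y := by
        funext p
        simp only [Pi.add_apply, Pi.smul_apply, smul_eq_mul, hydef]
        field_simp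
        ring
      rw [hcomb]
      exact (convex_convexHull ℝ (antiVecs P)) hχhull hyhull htpos.le h1t.le (by ring)

lemma chainPolytope_eq_hull :
    chainPolytope P = convexHull ℝ (antiVecs P) := by
  apply le_antisymm
  · intro x hx
    exact mem_hull_aux (Finset.univ.filter (fun p => x p ≠ 0)).card x hx le_rfl
  · apply convexHull_min _ chainPolytope_convex
    rintro f ⟨A, hA, rfl⟩
    exact achi_mem hA

end Aux

/-- The vertices (extreme points) of the chain polytope of a finite poset are
exactly the characteristic vectors of antichains. -/
theorem chainPolytope_extremePoints (P : Type*) [PartialOrder P] [Fintype P]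
    (x : P → ℝ) :
    x ∈ Set.extremePoints ℝ (chainPolytope P) ↔
      ∃ A : Set P, IsAntichain (· ≤ ·) A ∧
        x = fun p => if p ∈ A then (1 : ℝ) else 0 := by
  constructor
  · intro hx
    rw [chainPolytope_eq_hull] at hx
    obtain ⟨A, hA, hxA⟩ := extremePoints_convexHull_subset hx
    exact ⟨A, hA, hxA⟩
  · rintro ⟨A, hA, rfl⟩
    have hmem : achi A ∈ chainPolytope P := achi_mem hA
    rw [mem_extremePoints]
    refine ⟨hmem, ?_⟩
    rintro x₁ hx₁ x₂ hx₂ ⟨a, b, ha, hb, hab, heq⟩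
    have hx1le : ∀ p, x₁ p ≤ 1 := le_one_of_mem hx₁
    have hx2le : ∀ p, x₂ p ≤ 1 := le_one_of_mem hx₂
    have key : ∀ p, x₁ p = achi A p ∧ x₂ p = achi A p := by
      intro p
      have heqp : a * x₁ p + b * x₂ p = achi A p := by
        have := congrFun heq p
        simpa [achi] using this
      by_cases hp : p ∈ A
      · simp only [achi, hp, if_pos] at heqp ⊢
        constructor <;> nlinarith [hx1le p, hx2le p, hx₁.1 p, hx₂.1 p]
      · simp only [achi, hp, if_neg, if_false] at heqp ⊢
        constructor <;> nlinarith [hx₁.1 p, hx₂.1 p]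
    exact ⟨funext fun p => (key p).1, funext fun p => (key p).2⟩
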